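/- Let m, s ≥ 2 be integers with m ≠ s and gcd(m,s) = 1, and let R = {0,…,ms−1} × {0,…,m+s−1} ⊆ ℤ² be the ms × (m+s) rectangle (the horizontal block). Then R has exactly two (m,s)-tilings: a bottom row of s squares of size m with a top row of m squares of size s above it, namely {((im, 0), m) : 0 ≤ i < s} ∪ {((js, m), s) : 0 ≤ j < m}, and the tiling with the two rows interchanged, namely {((js, 0), s) : 0 ≤ j < m} ∪ {((im, s), m) : 0 ≤ i < s}. -/

import Mathlib

open Finset

/-- The k×k square of cells with lower-left corner `p`. -/
def sqCells (p : ℤ × ℤ) (k : ℕ) : Finset (ℤ × ℤ) :=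
  (Finset.range k ×ˢ Finset.range k).image fun ij => (p.1 + ij.1, p.2 + ij.2)

/-- `T` is an (m,s)-tiling of the finite region `R`. -/
def IsTiling (m s : ℕ) (R : Finset (ℤ × ℤ)) (T : Finset ((ℤ × ℤ) × ℕ)) : Prop :=
  (∀ t ∈ T, t.2 = m ∨ t.2 = s) ∧
  (∀ t ∈ T, ∀ t' ∈ T, t ≠ t' → Disjoint (sqCells t.1 t.2) (sqCells t'.1 t'.2)) ∧
  T.biUnion (fun t => sqCells t.1 t.2) = R

/-- The a×b rectangular region in ℤ². -/
def rectRegion (a b : ℕ) : Finset (ℤ × ℤ) :=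
  (Finset.range a ×ˢ Finset.range b).image fun ij => ((ij.1 : ℤ), (ij.2 : ℤ))

/-- A bottom row of s squares of size m with a top row of m squares of size s above it. -/
def hblockLowM (m s : ℕ) : Finset ((ℤ × ℤ) × ℕ) :=
  ((Finset.range s).image fun i : ℕ => ((((i * m : ℕ) : ℤ), (0 : ℤ)), m)) ∪
  ((Finset.range m).image fun j : ℕ => ((((j * s : ℕ) : ℤ), (m : ℤ)), s))

/-- A bottom row of m squares of size s with a top row of s squares of size m above it. -/
def hblockLowS (m s : ℕ) : Finset ((ℤ × ℤ) × ℕ) :=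
  ((Finset.range m).image fun j : ℕ => ((((j * s : ℕ) : ℤ), (0 : ℤ)), s)) ∪
  ((Finset.range s).image fun i : ℕ => ((((i * m : ℕ) : ℤ), (s : ℤ)), m))

lemma mem_sqCells {p : ℤ × ℤ} {k : ℕ} {c : ℤ × ℤ} :
    c ∈ sqCells p k ↔ p.1 ≤ c.1 ∧ c.1 < p.1 + k ∧ p.2 ≤ c.2 ∧ c.2 < p.2 + k := by
  constructor
  · intro h
    simp only [sqCells, mem_image, mem_product, mem_range] at h
    obtain ⟨⟨i, j⟩, ⟨hi, hj⟩, rfl⟩ := h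
    simp only
    omega
  · rintro ⟨h1, h2, h3, h4⟩
    simp only [sqCells, mem_image, mem_product, mem_range]
    refine ⟨((c.1 - p.1).toNat, (c.2 - p.2).toNat), ⟨by omega, by omega⟩, ?_⟩
    obtain ⟨cx, cy⟩ := c
    simp only [Prod.mk.injEq]
    constructor <;> omega

lemma mem_rectRegion {a b : ℕ} {c : ℤ × ℤ} :
    c ∈ rectRegion a b ↔ 0 ≤ c.1 ∧ c.1 < a ∧ 0 ≤ c.2 ∧ c.2 < b := by
  constructor
  · intro h
    simp only [rectRegion, mem_image, mem_product, mem_range] at h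
    obtain ⟨⟨i, j⟩, ⟨hi, hj⟩, rfl⟩ := h
    simp only
    omega
  · rintro ⟨h1, h2, h3, h4⟩
    simp only [rectRegion, mem_image, mem_product, mem_range]
    refine ⟨(c.1.toNat, c.2.toNat), ⟨by omega, by omega⟩, ?_⟩
    obtain ⟨cx, cy⟩ := c
    simp only [Prod.mk.injEq]
    constructor <;> omega

lemma nt_key {m s : ℕ} (hm : 2 ≤ m) (hs : 2 ≤ s) (hcop : Nat.Coprime m s)
    {a b : ℕ} (h : a * m + b * s = m + s) : a = 1 ∧ b = 1 := by
  rcases Nat.eq_zero_or_pos b with hb | hb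
  · subst hb
    have ha1 : 1 ≤ a := by
      rcases Nat.eq_zero_or_pos a with rfl | h0
      · omega
      · omega
    obtain ⟨a', rfl⟩ : ∃ a', a = a' + 1 := ⟨a - 1, by omega⟩
    rw [add_mul, one_mul] at h
    have hdvd : m ∣ s := ⟨a', by rw [mul_comm]; omega⟩
    have := Nat.Coprime.eq_one_of_dvd hcop hdvd
    omega
  · obtain ⟨b', rfl⟩ : ∃ b', b = b' + 1 := ⟨b - 1, by omega⟩
    rw [add_mul, one_mul] at h
    have ha : a ≤ 1 := by
      by_contra hc
      push_neg at hc
      have : 2 * m ≤ a * m := Nat.mul_le_mul_right m hc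
      omega
    interval_cases a
    ·
      have hbs : b' * s = m := by omega
      rcases Nat.eq_zero_or_pos b' with rfl | h0
      · omega
      · have hdvd : s ∣ m := ⟨b', by rw [mul_comm]; omega⟩
        have := Nat.Coprime.eq_one_of_dvd hcop.symm hdvd
        omega
    · have : b' = 0 := by
        by_contra hc
        have : 1 * s ≤ b' * s := Nat.mul_le_mul_right s (by omega)
        omega
      omega

section Machinery

variable {m s : ℕ} {T : Finset ((ℤ × ℤ) × ℕ)}

lemma cover_unique {R} (hT : IsTiling m s R T) {t t' : (ℤ × ℤ) × ℕ} (ht : t ∈ T) (ht' : t' ∈ T)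
    {c : ℤ × ℤ} (hc : c ∈ sqCells t.1 t.2) (hc' : c ∈ sqCells t'.1 t'.2) : t = t' := by
  by_contra h
  exact (Finset.disjoint_left.mp (hT.2.1 t ht t' ht' h)) hc hc'

lemma eq_of_common {R} (hT : IsTiling m s R T) {t t' : (ℤ × ℤ) × ℕ} (ht : t ∈ T) (ht' : t' ∈ T)
    (x y : ℤ)
    (h1 : t.1.1 ≤ x) (h2 : x < t.1.1 + t.2) (h3 : t.1.2 ≤ y) (h4 : y < t.1.2 + t.2)
    (h1' : t'.1.1 ≤ x) (h2' : x < t'.1.1 + t'.2) (h3' : t'.1.2 ≤ y) (h4' : y < t'.1.2 + t'.2) :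
    t = t' :=
  cover_unique hT ht ht' ((mem_sqCells (c := (x, y))).2 ⟨h1, h2, h3, h4⟩) ((mem_sqCells (c := (x, y))).2 ⟨h1', h2', h3', h4'⟩)

lemma exists_cover (hT : IsTiling m s (rectRegion (m * s) (m + s)) T) {x y : ℤ}
    (hx0 : 0 ≤ x) (hx : x < m * s) (hy0 : 0 ≤ y) (hy : y < m + s) :
    ∃ t ∈ T, t.1.1 ≤ x ∧ x < t.1.1 + t.2 ∧ t.1.2 ≤ y ∧ y < t.1.2 + t.2 := by
  have hc : (x, y) ∈ rectRegion (m * s) (m + s) := by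
    rw [mem_rectRegion]
    refine ⟨hx0, by push_cast; omega, hy0, by push_cast; omega⟩
  rw [← hT.2.2, Finset.mem_biUnion] at hc
  obtain ⟨t, ht, hmem⟩ := hc
  exact ⟨t, ht, mem_sqCells.1 hmem⟩

lemma tile_bounds (hm : 2 ≤ m) (hs : 2 ≤ s)
    (hT : IsTiling m s (rectRegion (m * s) (m + s)) T) {t : (ℤ × ℤ) × ℕ} (ht : t ∈ T) :
    0 ≤ t.1.1 ∧ t.1.1 + t.2 ≤ m * s ∧ 0 ≤ t.1.2 ∧ t.1.2 + t.2 ≤ m + s ∧ 2 ≤ t.2 := by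
  have hk : 2 ≤ t.2 := by rcases hT.1 t ht with h | h <;> omega
  have hsub : sqCells t.1 t.2 ⊆ rectRegion (m * s) (m + s) := by
    rw [← hT.2.2]
    intro c hc
    exact Finset.mem_biUnion.2 ⟨t, ht, hc⟩
  have h1 := mem_rectRegion.1 (hsub ((mem_sqCells (c := t.1)).2 ⟨le_refl _, by omega, le_refl _, by omega⟩))
  have h2 := mem_rectRegion.1 (hsub ((mem_sqCells (c := (t.1.1 + t.2 - 1, t.1.2 + t.2 - 1))).2 ⟨by omega, by omega, by omega, by omega⟩))
  simp only at h1 h2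
  push_cast at h1 h2
  refine ⟨by omega, by omega, by omega, by omega, hk⟩

lemma stack_step (hm : 2 ≤ m) (hs : 2 ≤ s)
    (hT : IsTiling m s (rectRegion (m * s) (m + s)) T) {t : (ℤ × ℤ) × ℕ} (ht : t ∈ T)
    {x : ℤ} (hx1 : t.1.1 ≤ x) (hx2 : x < t.1.1 + t.2)
    (hlt : t.1.2 + t.2 < m + s) :
    ∃ t' ∈ T, t'.1.1 ≤ x ∧ x < t'.1.1 + t'.2 ∧ t'.1.2 = t.1.2 + t.2 := by
  obtain ⟨hb1, hb2, hb3, hb4, hb5⟩ := tile_bounds hm hs hT ht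
  obtain ⟨t', ht', g1, g2, g3, g4⟩ :=
    exists_cover hT (x := x) (y := t.1.2 + t.2) (by omega) (by omega) (by omega) hlt
  obtain ⟨hb1', hb2', hb3', hb4', hb5'⟩ := tile_bounds hm hs hT ht'
  refine ⟨t', ht', g1, g2, ?_⟩
  rcases lt_trichotomy t'.1.2 (t.1.2 + (t.2 : ℤ)) with h | h | h
  · rcases lt_or_ge t'.1.2 t.1.2 with h2 | h2
    · -- t' covers (x, t.1.2), so t' = t, contradiction on corner rows
      have := eq_of_common hT ht ht' x t.1.2 hx1 hx2 (le_refl _) (by omega) g1 g2 (by omega) (by omega)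
      rw [this] at h2
      omega
    · -- t covers (x, t'.1.2), so t = t', contradiction
      have := eq_of_common hT ht ht' x t'.1.2 hx1 hx2 h2 (by omega) g1 g2 (le_refl _) (by omega)
      rw [← this] at g4
      omega
  · exact h
  · omega

lemma stack_reach (hm : 2 ≤ m) (hs : 2 ≤ s)
    (hT : IsTiling m s (rectRegion (m * s) (m + s)) T) :
    ∀ d : ℕ, ∀ t ∈ T, ∀ x : ℤ, t.1.1 ≤ x → x < t.1.1 + t.2 →
      t.1.2 + (d : ℤ) = m + s → ∃ a b : ℕ, a * m + b * s = d := by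
  intro d
  induction d using Nat.strong_induction_on with
  | _ d ih =>
    intro t ht x hx1 hx2 hd
    obtain ⟨hb1, hb2, hb3, hb4, hb5⟩ := tile_bounds hm hs hT ht
    have htd : t.2 ≤ d := by omega
    by_cases hfin : t.2 = d
    · rcases hT.1 t ht with hk | hk
      · exact ⟨1, 0, by omega⟩
      · exact ⟨0, 1, by omega⟩
    · have hlt : t.1.2 + (t.2 : ℤ) < m + s := by omega
      obtain ⟨t', ht', g1, g2, g3⟩ := stack_step hm hs hT ht hx1 hx2 hlt
      obtain ⟨a, b, hab⟩ := ih (d - t.2) (by omega) t' ht' x g1 g2 (by rw [g3]; omega)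
      rcases hT.1 t ht with hk | hk
      · refine ⟨a + 1, b, ?_⟩
        have : (a + 1) * m + b * s = a * m + b * s + m := by ring
        omega
      · refine ⟨a, b + 1, ?_⟩
        have : a * m + (b + 1) * s = a * m + b * s + s := by ring
        omega

lemma column_structure (hm : 2 ≤ m) (hs : 2 ≤ s) (hne : m ≠ s) (hcop : Nat.Coprime m s)
    (hT : IsTiling m s (rectRegion (m * s) (m + s)) T)
    {x : ℤ} (hx0 : 0 ≤ x) (hx : x < m * s) :
    ∃ t1 ∈ T, ∃ t2 ∈ T,
      t1.1.1 ≤ x ∧ x < t1.1.1 + t1.2 ∧ t1.1.2 = 0 ∧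
      t2.1.1 ≤ x ∧ x < t2.1.1 + t2.2 ∧ (t2.1.2 : ℤ) = t1.2 ∧ t1.2 + t2.2 = m + s := by
  obtain ⟨t1, ht1, g1, g2, g3, g4⟩ :=
    exists_cover hT (x := x) (y := 0) hx0 hx (le_refl 0) (by omega)
  obtain ⟨hb1, hb2, hb3, hb4, hb5⟩ := tile_bounds hm hs hT ht1
  have h10 : t1.1.2 = 0 := by omega
  have hlt1 : t1.1.2 + (t1.2 : ℤ) < m + s := by
    rcases hT.1 t1 ht1 with hk | hk <;> omega
  obtain ⟨t2, ht2, g1', g2', g3'⟩ := stack_step hm hs hT ht1 g1 g2 hlt1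
  obtain ⟨hb1', hb2', hb3', hb4', hb5'⟩ := tile_bounds hm hs hT ht2
  refine ⟨t1, ht1, t2, ht2, g1, g2, h10, g1', g2', by omega, ?_⟩
  by_contra hne2
  have hlt2 : t2.1.2 + (t2.2 : ℤ) < m + s := by omega
  obtain ⟨t3, ht3, f1, f2, f3⟩ := stack_step hm hs hT ht2 g1' g2' hlt2
  have hd : (0 : ℤ) ≤ (m : ℤ) + s - t1.2 - t2.2 := by
    obtain ⟨c1, c2, c3, c4, c5⟩ := tile_bounds hm hs hT ht3
    omega
  obtain ⟨a, b, hab⟩ := stack_reach hm hs hT ((m + s) - t1.2 - t2.2) t3 ht3 x f1 f2 (by push_cast; omega)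
  have habn : a * m + b * s + t1.2 + t2.2 = m + s := by omega
  rcases hT.1 t1 ht1 with hk1 | hk1 <;> rcases hT.1 t2 ht2 with hk2 | hk2
  · -- m, m : (a+2)*m + b*s = m+s
    have : (a + 2) * m + b * s = m + s := by
      have : (a + 2) * m + b * s = a * m + b * s + m + m := by ring
      omega
    have := nt_key hm hs hcop this
    omega
  · omega
  · omega
  · have : a * m + (b + 2) * s = m + s := by
      have : a * m + (b + 2) * s = a * m + b * s + s + s := by ring
      omega
    have := nt_key hm hs hcop this
    omega

lemma col_tile_eq (hm : 2 ≤ m) (hs : 2 ≤ s)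
    (hT : IsTiling m s (rectRegion (m * s) (m + s)) T)
    {x : ℤ} {t1 t2 t : (ℤ × ℤ) × ℕ} (ht1 : t1 ∈ T) (ht2 : t2 ∈ T) (ht : t ∈ T)
    (p1 : t1.1.1 ≤ x) (p2 : x < t1.1.1 + t1.2) (p3 : t1.1.2 = 0)
    (q1 : t2.1.1 ≤ x) (q2 : x < t2.1.1 + t2.2) (q3 : (t2.1.2 : ℤ) = t1.2)
    (q4 : (t1.2 : ℤ) + t2.2 = m + s)
    (hc1 : t.1.1 ≤ x) (hc2 : x < t.1.1 + t.2) :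
    t = t1 ∨ t = t2 := by
  obtain ⟨c1, c2, c3, c4, c5⟩ := tile_bounds hm hs hT ht
  by_cases h : t.1.2 < (t1.2 : ℤ)
  · exact Or.inl (eq_of_common hT ht ht1 x t.1.2 hc1 hc2 (le_refl _) (by omega)
      p1 p2 (by omega) (by omega))
  · exact Or.inr (eq_of_common hT ht ht2 x t.1.2 hc1 hc2 (le_refl _) (by omega)
      q1 q2 (by omega) (by omega))

lemma Qlemma (hm : 2 ≤ m) (hs : 2 ≤ s) (hne : m ≠ s) (hcop : Nat.Coprime m s)
    (hT : IsTiling m s (rectRegion (m * s) (m + s)) T) {k : ℕ}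
    (hk0 : (((0 : ℤ), (0 : ℤ)), k) ∈ T) :
    ∀ n : ℕ, ∀ x : ℤ, x = (n : ℤ) → x < m * s →
      (∃ c : ℤ, ((c, (0 : ℤ)), k) ∈ T ∧ (k : ℤ) ∣ c ∧ c ≤ x ∧ x < c + k) ∧
      (∃ w : ℤ, ((w, (k : ℤ)), m + s - k) ∈ T ∧ ((m + s - k : ℕ) : ℤ) ∣ w ∧
        w ≤ x ∧ x < w + (m + s - k : ℕ)) := by
  have hkor := hT.1 _ hk0
  simp only at hkor
  have hk2 : 2 ≤ k := by omega
  have hkk : k + (m + s - k) = m + s := by omega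
  have hk'2 : 2 ≤ m + s - k := by omega
  have hkne : k ≠ m + s - k := by omega
  have hkms2 : k * (m + s - k) = m * s := by
    rcases hkor with h | h
    · rw [h, show m + s - m = s by omega]
    · rw [h, show m + s - s = m by omega, mul_comm]
  have hkcop : Nat.Coprime k (m + s - k) := by
    rcases hkor with h | h
    · rw [h, show m + s - m = s by omega]; exact hcop
    · rw [h, show m + s - s = m by omega]; exact hcop.symm
  intro n
  induction n using Nat.strong_induction_on with
  | _ n ih =>
    intro x hxn hx
    have hx0 : 0 ≤ x := by omega
    obtain ⟨t1, ht1, t2, ht2, g1, g2, g3, f1, f2, f3, f4⟩ :=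
      column_structure hm hs hne hcop hT hx0 hx
    obtain ⟨b1, b2, b3, b4, b5⟩ := tile_bounds hm hs hT ht1
    obtain ⟨d1, d2, d3, d4, d5⟩ := tile_bounds hm hs hT ht2
    -- Claim A : k ∣ t1.1.1 and t1.2 = k
    have claimA : (k : ℤ) ∣ t1.1.1 ∧ t1.2 = k := by
      rcases eq_or_lt_of_le b1 with hc0 | hc0
      · -- corner column is 0, so t1 is the tile hk0
        have := eq_of_common hT ht1 hk0 0 0 (by omega) (by omega) (by omega) (by omega)
          (by simp) (by simp; omega) (by simp) (by simp; omega)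
        rw [this]
        exact ⟨by simp, rfl⟩
      · -- corner column positive: use induction hypothesis at t1.1.1 - 1
        have hcn : ((t1.1.1 - 1).toNat : ℤ) = t1.1.1 - 1 := by omega
        obtain ⟨⟨c₀, hc₀T, hc₀d, hc₀1, hc₀2⟩, ⟨w₀, hw₀T, hw₀d, hw₀1, hw₀2⟩⟩ :=
          ih (t1.1.1 - 1).toNat (by omega) (t1.1.1 - 1) (by omega) (by omega)
        -- show t1.1.1 = c₀ + k
        have hck : t1.1.1 = c₀ + k := by
          rcases lt_or_ge t1.1.1 (c₀ + (k : ℤ)) with hlt | hle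
          · exfalso
            have := eq_of_common hT ht1 hc₀T t1.1.1 0 (le_refl _) (by omega) (by omega) (by omega)
              (by simp; omega) (by simp; omega) (by simp) (by simp; omega)
            have : t1.1.1 = c₀ := by rw [this]
            omega
          · omega
        have hdvd1 : (k : ℤ) ∣ t1.1.1 := by
          rw [hck]; exact dvd_add hc₀d (dvd_refl _)
        refine ⟨hdvd1, ?_⟩
        by_contra hk1
        have hor1 := hT.1 t1 ht1
        have hk1' : t1.2 = m + s - k := by omega
        -- the tile ((w₀, k), m+s-k) cannot cover column t1.1.1
        have hwc : t1.1.1 = w₀ + (m + s - k : ℕ) := by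
          rcases lt_or_ge t1.1.1 (w₀ + ((m + s - k : ℕ) : ℤ)) with hlt | hle
          · exfalso
            obtain ⟨u1, hu1, u2, hu2, e1, e2, e3, e4, e5, e6, e7⟩ :=
              column_structure hm hs hne hcop hT (x := t1.1.1) (by omega) (by omega)
            have hu1t1 : u1 = t1 := eq_of_common hT hu1 ht1 t1.1.1 0 e1 e2 (by omega) (by omega)
              (le_refl _) (by omega) (by omega) (by omega)
            rcases col_tile_eq hm hs hT hu1 hu2 hw₀T e1 e2 e3 e4 e5 e6 (by exact_mod_cast e7)
              (by simp; omega) (by simp; omega) with h | h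
            · rw [← h] at e3; simp at e3; omega
            · rw [← h] at e6
              simp only at e6
              rw [hu1t1] at e6
              omega
          · omega
        have hdvd2 : ((m + s - k : ℕ) : ℤ) ∣ t1.1.1 := by
          rw [hwc]; exact dvd_add hw₀d (dvd_refl _)
        -- combine: m*s divides t1.1.1, contradiction
        have hn1 : k ∣ t1.1.1.toNat := by
          rw [← Int.natCast_dvd_natCast, Int.toNat_of_nonneg (by omega)]
          exact hdvd1
        have hn2 : (m + s - k) ∣ t1.1.1.toNat := by
          rw [← Int.natCast_dvd_natCast, Int.toNat_of_nonneg (by omega)]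
          exact hdvd2
        have hmul := Nat.Coprime.mul_dvd_of_dvd_of_dvd hkcop hn1 hn2
        rw [hkms2] at hmul
        have := Nat.le_of_dvd (by omega) hmul
        omega
    obtain ⟨hdvdc, hsz1⟩ := claimA
    have ht1eq : t1 = ((t1.1.1, (0 : ℤ)), k) := by
      rw [← g3, ← hsz1]
    -- top part
    have hsz2 : t2.2 = m + s - k := by omega
    have hb2k : t2.1.2 = (k : ℤ) := by omega
    have claimB : ((m + s - k : ℕ) : ℤ) ∣ t2.1.1 := by
      rcases eq_or_lt_of_le d1 with hw0 | hw0
      · exact ⟨0, by omega⟩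
      · have hcn : ((t2.1.1 - 1).toNat : ℤ) = t2.1.1 - 1 := by omega
        obtain ⟨-, ⟨w₀, hw₀T, hw₀d, hw₀1, hw₀2⟩⟩ :=
          ih (t2.1.1 - 1).toNat (by omega) (t2.1.1 - 1) (by omega) (by omega)
        have hwk : t2.1.1 = w₀ + (m + s - k : ℕ) := by
          rcases lt_or_ge t2.1.1 (w₀ + ((m + s - k : ℕ) : ℤ)) with hlt | hle
          · exfalso
            have := eq_of_common hT ht2 hw₀T t2.1.1 (k : ℤ) (le_refl _) (by omega)
              (by omega) (by omega)
              (by simp; omega) (by simp; omega) (by simp) (by simp; omega)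
            have : t2.1.1 = w₀ := by rw [this]
            omega
          · omega
        rw [hwk]; exact dvd_add hw₀d (dvd_refl _)
    have ht2eq : t2 = ((t2.1.1, (k : ℤ)), m + s - k) := by
      rw [← hb2k, ← hsz2]
    constructor
    · refine ⟨t1.1.1, ?_, hdvdc, g1, ?_⟩
      · rw [← ht1eq]; exact ht1
      · rw [← hsz1]; exact g2
    · refine ⟨t2.1.1, ?_, claimB, f1, ?_⟩
      · rw [← ht2eq]; exact ht2
      · rw [show ((m + s - k : ℕ) : ℤ) = (t2.2 : ℤ) by omega]; exact f2

lemma T_eq_generic (hm : 2 ≤ m) (hs : 2 ≤ s) (hne : m ≠ s) (hcop : Nat.Coprime m s)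
    (hT : IsTiling m s (rectRegion (m * s) (m + s)) T) {k nb nt : ℕ}
    (hk0 : (((0 : ℤ), (0 : ℤ)), k) ∈ T)
    (hnb : nb * k = m * s) (hnt : nt * (m + s - k) = m * s) :
    T = ((Finset.range nb).image fun i : ℕ => ((((i * k : ℕ) : ℤ), (0 : ℤ)), k)) ∪
        ((Finset.range nt).image fun j : ℕ =>
          ((((j * (m + s - k) : ℕ) : ℤ), (k : ℤ)), m + s - k)) := by
  have hkor := hT.1 _ hk0
  simp only at hkor
  have hk2 : 2 ≤ k := by omega
  have hk'2 : 2 ≤ m + s - k := by omega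
  apply Finset.Subset.antisymm
  · intro t ht
    obtain ⟨b1, b2, b3, b4, b5⟩ := tile_bounds hm hs hT ht
    have hx : t.1.1 < m * s := by omega
    obtain ⟨t1, ht1, t2, ht2, g1, g2, g3, f1, f2, f3, f4⟩ :=
      column_structure hm hs hne hcop hT b1 hx
    obtain ⟨⟨c, hcT, hcd, hc1, hc2⟩, ⟨w, hwT, hwd, hw1, hw2⟩⟩ :=
      Qlemma hm hs hne hcop hT hk0 t.1.1.toNat t.1.1 (by omega) hx
    -- t1 is the c-tile
    have ht1c : t1 = ((c, (0 : ℤ)), k) := eq_of_common hT ht1 hcT t.1.1 0 g1 g2 (by omega)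
      (by omega) (by simp; omega) (by simp; omega) (by simp) (by simp; omega)
    have ht1k : t1.2 = k := by rw [ht1c]
    rcases col_tile_eq hm hs hT ht1 ht2 ht g1 g2 g3 f1 f2 f3 (by exact_mod_cast f4)
      (le_refl _) (by omega) with h | h
    · -- t is a bottom tile
      have hteq : t = ((c, (0 : ℤ)), k) := by rw [h, ht1c]
      have hxc : t.1.1 = c := by rw [hteq]
      obtain ⟨j, hj⟩ := hcd
      have hj0 : 0 ≤ j := by
        rcases le_or_gt 0 j with h' | h'
        · exact h'
        · exfalso
          have := mul_neg_of_pos_of_neg (show (0:ℤ) < k by omega) h'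
          omega
      refine Finset.mem_union_left _ (Finset.mem_image.2 ⟨j.toNat, Finset.mem_range.2 ?_, ?_⟩)
      · -- j.toNat < nb
        by_contra hge
        push_neg at hge
        have : (nb : ℤ) * k ≤ j * k := by
          have : (nb : ℤ) ≤ j := by omega
          exact mul_le_mul_of_nonneg_right this (by omega)
        have hcv : c = k * j := hj
        have hms : ((m : ℤ) * s) = (nb : ℤ) * k := by exact_mod_cast hnb.symm
        have hcomm : (j : ℤ) * k = k * j := mul_comm _ _
        omega
      · rw [hteq]
        have : ((j.toNat * k : ℕ) : ℤ) = c := by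
          rw [hj]; push_cast [Int.toNat_of_nonneg hj0]; ring
        rw [this]
    · -- t is a top tile
      have ht2w : t2 = ((w, (k : ℤ)), m + s - k) := by
        apply eq_of_common hT ht2 hwT t.1.1 (k : ℤ) f1 f2 (by omega) (by omega)
          (by simp; omega) (by simp; omega) (by simp) (by simp; omega)
      have hteq : t = ((w, (k : ℤ)), m + s - k) := by rw [h, ht2w]
      have hxc : t.1.1 = w := by rw [hteq]
      obtain ⟨j, hj⟩ := hwd
      have hj0 : 0 ≤ j := by
        rcases le_or_gt 0 j with h' | h'
        · exact h'
        · exfalso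
          have := mul_neg_of_pos_of_neg (show (0:ℤ) < ((m + s - k : ℕ) : ℤ) by omega) h'
          omega
      refine Finset.mem_union_right _ (Finset.mem_image.2 ⟨j.toNat, Finset.mem_range.2 ?_, ?_⟩)
      · by_contra hge
        push_neg at hge
        have : (nt : ℤ) * (m + s - k : ℕ) ≤ j * (m + s - k : ℕ) := by
          have : (nt : ℤ) ≤ j := by omega
          exact mul_le_mul_of_nonneg_right this (by omega)
        have hwv : w = ((m + s - k : ℕ) : ℤ) * j := hj
        have hms : ((m : ℤ) * s) = (nt : ℤ) * ((m + s - k : ℕ) : ℤ) := by exact_mod_cast hnt.symm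
        have hcomm : (j : ℤ) * ((m + s - k : ℕ) : ℤ) = ((m + s - k : ℕ) : ℤ) * j := mul_comm _ _
        omega
      · rw [hteq]
        have : ((j.toNat * (m + s - k) : ℕ) : ℤ) = w := by
          rw [hj]; push_cast [Int.toNat_of_nonneg hj0]; ring
        rw [this]
  · intro t ht
    rcases Finset.mem_union.1 ht with h | h
    · obtain ⟨i, hi, hteq⟩ := Finset.mem_image.1 h
      rw [Finset.mem_range] at hi
      have hik : i * k < m * s := by
        calc i * k < nb * k := by
              exact Nat.mul_lt_mul_of_lt_of_le hi (le_refl k) (by omega)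
          _ = m * s := hnb
      obtain ⟨⟨c, hcT, hcd, hc1, hc2⟩, -⟩ :=
        Qlemma hm hs hne hcop hT hk0 (i * k) ((i * k : ℕ) : ℤ) rfl (by exact_mod_cast hik)
      obtain ⟨j, hj⟩ := hcd
      have hceq : c = ((i * k : ℕ) : ℤ) := by
        have h1 : (k : ℤ) * j ≤ (k : ℤ) * i := by
          rw [← hj]; push_cast at hc1 ⊢; linarith [hc1]
        have h2 : (k : ℤ) * i < (k : ℤ) * (j + 1) := by
          have : ((i * k : ℕ) : ℤ) < c + k := hc2
          rw [hj] at this; push_cast at this ⊢; linarith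
        have hji : j = (i : ℤ) := by
          have := le_of_mul_le_mul_left h1 (by omega : (0:ℤ) < k)
          have := lt_of_mul_lt_mul_left h2 (by omega : (0:ℤ) ≤ k)
          omega
        rw [hj, hji]; push_cast; ring
      rw [← hteq, ← hceq]
      exact hcT
    · obtain ⟨i, hi, hteq⟩ := Finset.mem_image.1 h
      rw [Finset.mem_range] at hi
      have hik : i * (m + s - k) < m * s := by
        calc i * (m + s - k) < nt * (m + s - k) := by
              exact Nat.mul_lt_mul_of_lt_of_le hi (le_refl _) (by omega)
          _ = m * s := hnt
      obtain ⟨-, ⟨w, hwT, hwd, hw1, hw2⟩⟩ :=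
        Qlemma hm hs hne hcop hT hk0 (i * (m + s - k)) ((i * (m + s - k) : ℕ) : ℤ) rfl
          (by exact_mod_cast hik)
      obtain ⟨j, hj⟩ := hwd
      have hceq : w = ((i * (m + s - k) : ℕ) : ℤ) := by
        have h1 : ((m + s - k : ℕ) : ℤ) * j ≤ ((m + s - k : ℕ) : ℤ) * i := by
          rw [← hj]; push_cast at hw1 ⊢; linarith [hw1]
        have h2 : ((m + s - k : ℕ) : ℤ) * i < ((m + s - k : ℕ) : ℤ) * (j + 1) := by
          have : ((i * (m + s - k) : ℕ) : ℤ) < w + (m + s - k : ℕ) := hw2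
          rw [hj] at this; push_cast at this ⊢; linarith
        have hji : j = (i : ℤ) := by
          have := le_of_mul_le_mul_left h1 (by omega : (0:ℤ) < ((m + s - k : ℕ) : ℤ))
          have := lt_of_mul_lt_mul_left h2 (by omega : (0:ℤ) ≤ ((m + s - k : ℕ) : ℤ))
          omega
        rw [hj, hji]; push_cast; ring
      rw [← hteq, ← hceq]
      exact hwT

end Machinery

lemma row_disj {i i' k : ℕ} (hne : i ≠ i') {x : ℤ}
    (h1 : ((i * k : ℕ) : ℤ) ≤ x) (h2 : x < ((i * k : ℕ) : ℤ) + k)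
    (h1' : ((i' * k : ℕ) : ℤ) ≤ x) (h2' : x < ((i' * k : ℕ) : ℤ) + k) : False := by
  rcases Nat.lt_or_ge i i' with h | h
  · have h3 : (i + 1) * k ≤ i' * k := Nat.mul_le_mul_right k h
    have h4 : (i + 1) * k = i * k + k := by ring
    omega
  · have h5 : i' < i := by omega
    have h3 : (i' + 1) * k ≤ i * k := Nat.mul_le_mul_right k h5
    have h4 : (i' + 1) * k = i' * k + k := by ring
    omega

lemma isTiling_hblockLowM (m s : ℕ) (hm : 1 ≤ m) (hs : 1 ≤ s) (hne : m ≠ s) :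
    IsTiling m s (rectRegion (m * s) (m + s)) (hblockLowM m s) := by
  refine ⟨?_, ?_, ?_⟩
  · intro t ht
    simp only [hblockLowM, Finset.mem_union, Finset.mem_image, Finset.mem_range] at ht
    rcases ht with ⟨i, hi, rfl⟩ | ⟨j, hj, rfl⟩
    · left; rfl
    · right; rfl
  · intro t ht t' ht' hnet
    simp only [hblockLowM, Finset.mem_union, Finset.mem_image, Finset.mem_range] at ht ht'
    rw [Finset.disjoint_left]
    intro c hc hc'
    rw [mem_sqCells] at hc hc'
    rcases ht with ⟨i, hi, rfl⟩ | ⟨i, hi, rfl⟩ <;> rcases ht' with ⟨i', hi', rfl⟩ | ⟨i', hi', rfl⟩ <;>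
      simp only at hc hc'
    · have : i ≠ i' := by rintro rfl; exact hnet rfl
      exact row_disj this hc.1 hc.2.1 hc'.1 hc'.2.1
    · omega
    · omega
    · have : i ≠ i' := by rintro rfl; exact hnet rfl
      exact row_disj this hc.1 hc.2.1 hc'.1 hc'.2.1
  · apply Finset.ext
    intro c
    simp only [Finset.mem_biUnion, hblockLowM, Finset.mem_union, Finset.mem_image,
      Finset.mem_range]
    constructor
    · rintro ⟨t, (⟨i, hi, rfl⟩ | ⟨j, hj, rfl⟩), hmem⟩ <;>
        rw [mem_sqCells] at hmem <;> simp only at hmem <;> rw [mem_rectRegion]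
      · have h3 : (i + 1) * m ≤ s * m := Nat.mul_le_mul_right m hi
        have h4 : (i + 1) * m = i * m + m := by ring
        have h5 : s * m = m * s := Nat.mul_comm s m
        refine ⟨by omega, by omega, by omega, by omega⟩
      · have h3 : (j + 1) * s ≤ m * s := Nat.mul_le_mul_right s hj
        have h4 : (j + 1) * s = j * s + s := by ring
        refine ⟨by omega, by omega, by omega, by omega⟩
    · intro hc
      rw [mem_rectRegion] at hc
      obtain ⟨hc1, hc2, hc3, hc4⟩ := hc
      by_cases hy : c.2 < m
      · obtain ⟨q, r, hr, hqr⟩ : ∃ q r, r < m ∧ c.1.toNat = q * m + r :=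
          ⟨c.1.toNat / m, c.1.toNat % m, Nat.mod_lt _ (by omega), by
            conv_lhs => rw [← Nat.div_add_mod c.1.toNat m]
            ring⟩
        have hql : q < s := by
          by_contra hge
          push_neg at hge
          have h3 : s * m ≤ q * m := Nat.mul_le_mul_right m hge
          have h5 : s * m = m * s := Nat.mul_comm s m
          omega
        refine ⟨((((q * m : ℕ) : ℤ), (0 : ℤ)), m), Or.inl ⟨q, hql, rfl⟩, ?_⟩
        rw [mem_sqCells]
        simp only
        refine ⟨by omega, by omega, by omega, by omega⟩
      · obtain ⟨q, r, hr, hqr⟩ : ∃ q r, r < s ∧ c.1.toNat = q * s + r :=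
          ⟨c.1.toNat / s, c.1.toNat % s, Nat.mod_lt _ (by omega), by
            conv_lhs => rw [← Nat.div_add_mod c.1.toNat s]
            ring⟩
        have hql : q < m := by
          by_contra hge
          push_neg at hge
          have h3 : m * s ≤ q * s := Nat.mul_le_mul_right s hge
          omega
        refine ⟨((((q * s : ℕ) : ℤ), (m : ℤ)), s), Or.inr ⟨q, hql, rfl⟩, ?_⟩
        rw [mem_sqCells]
        simp only
        refine ⟨by omega, by omega, by omega, by omega⟩

lemma isTiling_comm {m s : ℕ} {R : Finset (ℤ × ℤ)} {T : Finset ((ℤ × ℤ) × ℕ)}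
    (h : IsTiling m s R T) : IsTiling s m R T :=
  ⟨fun t ht => (h.1 t ht).symm, h.2.1, h.2.2⟩

lemma isTiling_hblockLowS (m s : ℕ) (hm : 1 ≤ m) (hs : 1 ≤ s) (hne : m ≠ s) :
    IsTiling m s (rectRegion (m * s) (m + s)) (hblockLowS m s) := by
  have h := isTiling_hblockLowM s m hs hm (Ne.symm hne)
  rw [Nat.mul_comm s m, Nat.add_comm s m] at h
  exact isTiling_comm h

lemma uniqueness {m s : ℕ} {T : Finset ((ℤ × ℤ) × ℕ)} (hm : 2 ≤ m) (hs : 2 ≤ s)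
    (hne : m ≠ s) (hcop : Nat.Coprime m s)
    (hT : IsTiling m s (rectRegion (m * s) (m + s)) T) :
    T = hblockLowM m s ∨ T = hblockLowS m s := by
  obtain ⟨⟨⟨a, b⟩, k⟩, ht0, e1, e2, e3, e4⟩ :=
    exists_cover hT (x := 0) (y := 0) (le_refl _) (by positivity) (le_refl _) (by positivity)
  obtain ⟨c1, c2, c3, c4, c5⟩ := tile_bounds hm hs hT ht0
  simp only at e1 e2 e3 e4 c1 c2 c3 c4
  have ha : a = 0 := by omega
  have hb : b = 0 := by omega
  subst ha hb
  have hkor := hT.1 _ ht0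
  simp only at hkor
  rcases hkor with rfl | rfl
  · left
    have := T_eq_generic hm hs hne hcop hT ht0 (nb := s) (nt := k)
      (Nat.mul_comm s k) (by rw [show k + s - k = s by omega])
    rw [this, show k + s - k = s by omega]
    simp only [hblockLowM]
  · right
    have := T_eq_generic hm hs hne hcop hT ht0 (nb := m) (nt := k)
      rfl (by rw [show m + k - k = m by omega, Nat.mul_comm])
    rw [this, show m + k - k = m by omega]
    simp only [hblockLowS]


/-- For coprime `m ≠ s`, both at least 2, the horizontal block—the ms × (m+s)
rectangle—has exactly two (m,s)-tilings: a bottom row of s squares of size m with a top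
row of m squares of size s, and the tiling with the two rows interchanged. -/
theorem horizontal_block_has_two_tilings (m s : ℕ) (hm : 2 ≤ m) (hs : 2 ≤ s)
    (hne : m ≠ s) (hcop : Nat.Coprime m s) :
    {T | IsTiling m s (rectRegion (m * s) (m + s)) T} =
      {hblockLowM m s, hblockLowS m s} := by
  ext T
  simp only [Set.mem_setOf_eq, Set.mem_insert_iff, Set.mem_singleton_iff]
  constructor
  · intro hT
    exact uniqueness hm hs hne hcop hT
  · rintro (rfl | rfl)
    · exact isTiling_hblockLowM m s (by omega) (by omega) hne
    · exact isTiling_hblockLowS m s (by omega) (by omega) hne
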